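/- Let n, n' and m be nonnegative integers such that n+m and n'+m are both odd and n ≥ n'. Then the partisan chocolate game position PC(n,m) is less than or equal to PC(n',m) in the normal-play game order. -/

import Mathlib

universe u

namespace SetTheory

/-- Pre-games (combinatorial games before quotienting), as in the older Mathlib
`SetTheory.PGame`, which has since been removed from Mathlib. -/
inductive PGame : Type (u + 1)
  | mk : ∀ α β : Type u, (α → PGame) → (β → PGame) → PGame

namespace PGame

/-- Simultaneous definition of `x ≤ y` (first component) and `x ⧏ y` (second component),
as in the older Mathlib. -/
noncomputable def leLF (x : PGame.{u}) : PGame.{u} → Prop × Prop :=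
  PGame.rec (motive := fun _ => PGame.{u} → Prop × Prop)
    (fun xl xr xL xR ihL ihR y =>
      PGame.rec (motive := fun _ => Prop × Prop)
        (fun yl yr yL yR jhL jhR =>
          ((∀ i, (ihL i (mk yl yr yL yR)).2) ∧ ∀ j, (jhR j).2,
           (∃ i, (jhL i).1) ∨ ∃ j, (ihR j (mk yl yr yL yR)).1))
        y)
    x

instance : LE PGame.{u} :=
  ⟨fun x y => (leLF x y).1⟩

end PGame

end SetTheory

namespace SetTheory

namespace PGame

/-- `x ⧏ y`, as in the older Mathlib. -/
def LF (x y : PGame.{u}) : Prop := (leLF x y).2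

theorem mk_le_mk {xl xr : Type u} {xL : xl → PGame.{u}} {xR : xr → PGame.{u}}
    {yl yr : Type u} {yL : yl → PGame.{u}} {yR : yr → PGame.{u}} :
    mk xl xr xL xR ≤ mk yl yr yL yR ↔
      (∀ i, LF (xL i) (mk yl yr yL yR)) ∧ ∀ j, LF (mk xl xr xL xR) (yR j) := Iff.rfl

theorem mk_lf_mk {xl xr : Type u} {xL : xl → PGame.{u}} {xR : xr → PGame.{u}}
    {yl yr : Type u} {yL : yl → PGame.{u}} {yR : yr → PGame.{u}} :
    LF (mk xl xr xL xR) (mk yl yr yL yR) ↔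
      (∃ i, mk xl xr xL xR ≤ yL i) ∨ ∃ j, xR j ≤ mk yl yr yL yR := Iff.rfl

theorem not_le_aux (x y : PGame.{u}) : (¬ x ≤ y ↔ LF y x) ∧ (¬ y ≤ x ↔ LF x y) := by
  induction x generalizing y with
  | mk xl xr xL xR ihxL ihxR =>
    induction y with
    | mk yl yr yL yR ihyL ihyR =>
      rw [mk_le_mk, mk_le_mk, mk_lf_mk, mk_lf_mk]
      constructor
      · constructor
        · intro h
          by_contra hc
          simp only [not_or, not_exists] at hc
          exact h ⟨fun i => (ihxL i _).2.mp (hc.1 i), fun j => (ihyR j).2.mp (hc.2 j)⟩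
        · rintro (⟨i, hi⟩ | ⟨j, hj⟩) ⟨h1, h2⟩
          · exact (ihxL i _).2.mpr (h1 i) hi
          · exact (ihyR j).2.mpr (h2 j) hj
      · constructor
        · intro h
          by_contra hc
          simp only [not_or, not_exists] at hc
          exact h ⟨fun i => (ihyL i).1.mp (hc.1 i), fun j => (ihxR j _).1.mp (hc.2 j)⟩
        · rintro (⟨i, hi⟩ | ⟨j, hj⟩) ⟨h1, h2⟩
          · exact (ihyL i).1.mpr (h1 i) hi
          · exact (ihxR j _).1.mpr (h2 j) hj

theorem not_le {x y : PGame.{u}} : ¬ x ≤ y ↔ LF y x := (not_le_aux x y).1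

end PGame

end SetTheory

open SetTheory

/-- The partisan chocolate game position `PC n m`.
Left options: `PC n' m` with `n' < n` and `n' + m` even, and `PC n m'` with `m' < m` and
`n + m'` even. Right options: the same with "odd" in place of "even". -/
def PC : ℕ → ℕ → SetTheory.PGame
  | n, m =>
    SetTheory.PGame.mk
      {p : ℕ × ℕ // (p.2 = m ∧ p.1 < n ∧ Even (p.1 + m)) ∨ (p.1 = n ∧ p.2 < m ∧ Even (n + p.2))}
      {p : ℕ × ℕ // (p.2 = m ∧ p.1 < n ∧ Odd (p.1 + m)) ∨ (p.1 = n ∧ p.2 < m ∧ Odd (n + p.2))}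
      (fun p => PC p.1.1 p.1.2)
      (fun p => PC p.1.1 p.1.2)
termination_by n m => n + m
decreasing_by
  all_goals rcases p.2 with ⟨h1, h2, -⟩ | ⟨h1, h2, -⟩ <;> omega


lemma PC_eq (n m : ℕ) : PC n m =
    SetTheory.PGame.mk
      {p : ℕ × ℕ // (p.2 = m ∧ p.1 < n ∧ Even (p.1 + m)) ∨ (p.1 = n ∧ p.2 < m ∧ Even (n + p.2))}
      {p : ℕ × ℕ // (p.2 = m ∧ p.1 < n ∧ Odd (p.1 + m)) ∨ (p.1 = n ∧ p.2 < m ∧ Odd (n + p.2))}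
      (fun p => PC p.1.1 p.1.2)
      (fun p => PC p.1.1 p.1.2) := by
  rw [PC]

def tval (n m : ℕ) : ℕ := if n % 2 = 1 ∧ m % 2 = 1 then n + m - 2 else n + m

def vle (a b : ℕ) : Prop :=
  (a % 2 = 0 ∧ b % 2 = 1) ∨ (a % 2 = 0 ∧ b % 2 = 0 ∧ a ≤ b) ∨ (a % 2 = 1 ∧ b % 2 = 1 ∧ b ≤ a)

lemma tval_cases (n m : ℕ) :
    (n % 2 = 1 ∧ m % 2 = 1 ∧ tval n m = n + m - 2) ∨
    (¬(n % 2 = 1 ∧ m % 2 = 1) ∧ tval n m = n + m) := by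
  unfold tval; split_ifs with h
  exacts [Or.inl ⟨h.1, h.2, rfl⟩, Or.inr ⟨h, rfl⟩]

lemma arith_L (n m p q a b : ℕ) (hv : vle (tval n m) (tval p q))
    (hab : (b = m ∧ a < n ∧ Even (a + m)) ∨ (a = n ∧ b < m ∧ Even (n + b))) :
    ¬ vle (tval p q) (tval a b) := by
  rcases hab with ⟨h1, h2, h3⟩ | ⟨h1, h2, h3⟩ <;> rw [Nat.even_iff] at h3 <;>
    unfold vle at hv ⊢ <;>
    rcases tval_cases a b with ⟨a1,a2,a3⟩|⟨a1,a2⟩ <;>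
    rcases tval_cases n m with ⟨b1,b2,b3⟩|⟨b1,b2⟩ <;>
    rcases tval_cases p q with ⟨c1,c2,c3⟩|⟨c1,c2⟩ <;> omega

lemma arith_R (n m p q a b : ℕ) (hv : vle (tval n m) (tval p q))
    (hab : (b = q ∧ a < p ∧ Odd (a + q)) ∨ (a = p ∧ b < q ∧ Odd (p + b))) :
    ¬ vle (tval a b) (tval n m) := by
  rcases hab with ⟨h1, h2, h3⟩ | ⟨h1, h2, h3⟩ <;> rw [Nat.odd_iff] at h3 <;>
    unfold vle at hv ⊢ <;>
    rcases tval_cases a b with ⟨a1,a2,a3⟩|⟨a1,a2⟩ <;>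
    rcases tval_cases n m with ⟨b1,b2,b3⟩|⟨b1,b2⟩ <;>
    rcases tval_cases p q with ⟨c1,c2,c3⟩|⟨c1,c2⟩ <;> omega

set_option maxHeartbeats 1000000 in
lemma arith_main (n m p q : ℕ) (hv : ¬ vle (tval n m) (tval p q)) :
    (∃ a b, ((b = m ∧ a < n ∧ Even (a + m)) ∨ (a = n ∧ b < m ∧ Even (n + b))) ∧
      vle (tval p q) (tval a b)) ∨
    (∃ a b, ((b = q ∧ a < p ∧ Odd (a + q)) ∨ (a = p ∧ b < q ∧ Odd (p + b))) ∧
      vle (tval a b) (tval n m)) := by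
  unfold vle at hv
  obtain hx := tval_cases n m
  obtain hy := tval_cases p q
  by_cases hcx : tval n m % 2 = 1
  · by_cases hcy : tval p q % 2 = 1
    · -- both odd, tval p q > tval n m: reduce y by 2
      right
      rcases (show 2 ≤ p ∨ 2 ≤ q by omega) with hc | hc
      · exact ⟨p-2, q, Or.inl ⟨rfl, by omega, by rw [Nat.odd_iff]; omega⟩,
          by rcases tval_cases (p-2) q with ⟨a1,a2,a3⟩|⟨a1,a2⟩ <;> unfold vle <;> omega⟩
      · exact ⟨p, q-2, Or.inr ⟨rfl, by omega, by rw [Nat.odd_iff]; omega⟩,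
          by rcases tval_cases p (q-2) with ⟨a1,a2,a3⟩|⟨a1,a2⟩ <;> unfold vle <;> omega⟩
    · -- tx odd, ty even
      rcases (show tval p q < tval n m ∨ tval n m < tval p q by omega) with hc | hc
      · -- left witness: reduce x by 1 (n+m odd)
        left
        rcases (show m % 2 = 0 ∨ n % 2 = 0 by omega) with hc2 | hc2
        · exact ⟨n-1, m, Or.inl ⟨rfl, by omega, by rw [Nat.even_iff]; omega⟩,
            by rcases tval_cases (n-1) m with ⟨a1,a2,a3⟩|⟨a1,a2⟩ <;> unfold vle <;> omega⟩
        · exact ⟨n, m-1, Or.inr ⟨rfl, by omega, by rw [Nat.even_iff]; omega⟩,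
            by rcases tval_cases n (m-1) with ⟨a1,a2,a3⟩|⟨a1,a2⟩ <;> unfold vle <;> omega⟩
      · -- right witness: reduce y by 1
        right
        rcases (show 1 ≤ p ∨ 1 ≤ q by omega) with hc2 | hc2
        · by_cases hb : p % 2 = 1 ∧ q % 2 = 1
          · exact ⟨p-1, q, Or.inl ⟨rfl, by omega, by rw [Nat.odd_iff]; omega⟩,
              by rcases tval_cases (p-1) q with ⟨a1,a2,a3⟩|⟨a1,a2⟩ <;> unfold vle <;> omega⟩
          · rcases (show (p-1) % 2 + q % 2 = 1 ∨ p % 2 + (q-1) % 2 = 1 ∧ 1 ≤ q by omega)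
              with hc3 | hc3
            · exact ⟨p-1, q, Or.inl ⟨rfl, by omega, by rw [Nat.odd_iff]; omega⟩,
                by rcases tval_cases (p-1) q with ⟨a1,a2,a3⟩|⟨a1,a2⟩ <;> unfold vle <;> omega⟩
            · exact ⟨p, q-1, Or.inr ⟨rfl, by omega, by rw [Nat.odd_iff]; omega⟩,
                by rcases tval_cases p (q-1) with ⟨a1,a2,a3⟩|⟨a1,a2⟩ <;> unfold vle <;> omega⟩
        · exact ⟨p, q-1, Or.inr ⟨rfl, by omega, by rw [Nat.odd_iff]; omega⟩,
            by rcases tval_cases p (q-1) with ⟨a1,a2,a3⟩|⟨a1,a2⟩ <;> unfold vle <;> omega⟩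
  · -- tx even; must have ty even and ty < tx: reduce x by 2
    left
    rcases (show 2 ≤ n ∧ n % 2 = 0 ∨ 2 ≤ m ∧ m % 2 = 0 ∨
        3 ≤ n ∧ n % 2 = 1 ∨ 3 ≤ m ∧ m % 2 = 1 by omega) with hc | hc | hc | hc
    · exact ⟨n-2, m, Or.inl ⟨rfl, by omega, by rw [Nat.even_iff]; omega⟩,
        by rcases tval_cases (n-2) m with ⟨a1,a2,a3⟩|⟨a1,a2⟩ <;> unfold vle <;> omega⟩
    · exact ⟨n, m-2, Or.inr ⟨rfl, by omega, by rw [Nat.even_iff]; omega⟩,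
        by rcases tval_cases n (m-2) with ⟨a1,a2,a3⟩|⟨a1,a2⟩ <;> unfold vle <;> omega⟩
    · exact ⟨n-2, m, Or.inl ⟨rfl, by omega, by rw [Nat.even_iff]; omega⟩,
        by rcases tval_cases (n-2) m with ⟨a1,a2,a3⟩|⟨a1,a2⟩ <;> unfold vle <;> omega⟩
    · exact ⟨n, m-2, Or.inr ⟨rfl, by omega, by rw [Nat.even_iff]; omega⟩,
        by rcases tval_cases n (m-2) with ⟨a1,a2,a3⟩|⟨a1,a2⟩ <;> unfold vle <;> omega⟩

set_option maxHeartbeats 1000000 in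
lemma PC_main : ∀ (N n m p q : ℕ), n + m + p + q ≤ N →
    (PC n m ≤ PC p q ↔ vle (tval n m) (tval p q)) := by
  intro N
  induction N with
  | zero =>
    intro n m p q hsum
    obtain ⟨rfl, rfl, rfl, rfl⟩ : n = 0 ∧ m = 0 ∧ p = 0 ∧ q = 0 := by omega
    constructor
    · intro _; unfold vle tval; simp
    · intro _
      rw [PC_eq 0 0, PGame.mk_le_mk]
      constructor <;> rintro ⟨_, ⟨-, h, -⟩ | ⟨-, h, -⟩⟩ <;> omega
  | succ N ih =>
    intro n m p q hsum
    rw [PC_eq n m, PC_eq p q, PGame.mk_le_mk, ← PC_eq n m, ← PC_eq p q]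
    constructor
    · rintro ⟨hL, hR⟩
      by_contra hv
      rcases arith_main n m p q hv with ⟨a, b, hab, hvle⟩ | ⟨a, b, hab, hvle⟩
      · have hsum' : p + q + a + b ≤ N := by rcases hab with ⟨h1,h2,-⟩|⟨h1,h2,-⟩ <;> omega
        exact PGame.not_le.mpr (hL ⟨(a, b), hab⟩) ((ih p q a b hsum').mpr hvle)
      · have hsum' : a + b + n + m ≤ N := by rcases hab with ⟨h1,h2,-⟩|⟨h1,h2,-⟩ <;> omega
        exact PGame.not_le.mpr (hR ⟨(a, b), hab⟩) ((ih a b n m hsum').mpr hvle)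
    · intro hv
      constructor
      · rintro ⟨⟨a, b⟩, hab⟩
        show (PC a b).LF (PC p q)
        apply PGame.not_le.mp
        have hsum' : p + q + a + b ≤ N := by rcases hab with ⟨h1,h2,-⟩|⟨h1,h2,-⟩ <;> omega
        rw [ih p q a b hsum']
        exact arith_L n m p q a b hv hab
      · rintro ⟨⟨a, b⟩, hab⟩
        show (PC n m).LF (PC a b)
        apply PGame.not_le.mp
        have hsum' : a + b + n + m ≤ N := by rcases hab with ⟨h1,h2,-⟩|⟨h1,h2,-⟩ <;> omega
        rw [ih a b n m hsum']
        exact arith_R n m p q a b hv hab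

theorem stmt_3 (n n' m : ℕ) (hn : Odd (n + m)) (hn' : Odd (n' + m)) (h : n' ≤ n) :
    PC n m ≤ PC n' m := by
  rw [Nat.odd_iff] at hn hn'
  rw [PC_main (n + m + n' + m) n m n' m le_rfl]
  rcases tval_cases n m with ⟨a1,a2,a3⟩|⟨a1,a2⟩ <;>
    rcases tval_cases n' m with ⟨b1,b2,b3⟩|⟨b1,b2⟩ <;> unfold vle <;> omega
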